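/- Let n ≥ 1, p ≥ 1, q ≥ 1 with 1/q + n/(2p) > 1, and let g : [0,∞) → [0,∞) be continuous with compact support. Fix R₀ > 0 and T > 0, and for T' ∈ (T, T+1) define b(x,t) := -(T'-t)^{-1} g((T'-t)^{-1/2}|x|) for x ∈ B_{R₀}(0), t ∈ [0,T]. Then there is a constant c > 0, independent of T' ∈ (T,T+1), such that ∫₀^T ‖b(·,t)‖_{L^p(B_{R₀})}^q dt ≤ c. -/

import Mathlib

open MeasureTheory Set

theorem stmt8 (n : ℕ) (hn : 1 ≤ n) (p q : ℝ) (hp : 1 ≤ p) (hq : 1 ≤ q)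
    (hpq : 1 < 1/q + n/(2*p))
    (g : ℝ → ℝ) (hg : Continuous g) (hgsupp : HasCompactSupport g)
    (hgnn : ∀ ξ, 0 ≤ g ξ)
    (R₀ T : ℝ) (hR₀ : 0 < R₀) (hT : 0 < T) :
    ∃ c > (0:ℝ), ∀ T' ∈ Ioo T (T+1),
      ∫ t in Ioc (0:ℝ) T,
        (∫ x in Metric.ball (0 : EuclideanSpace ℝ (Fin n)) R₀,
            |(T'-t)⁻¹ * g ((T'-t) ^ (-(1/2:ℝ)) * ‖x‖)| ^ p) ^ (q/p) ≤ c := by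
  have hp0 : (0:ℝ) < p := lt_of_lt_of_le one_pos hp
  have hq0 : (0:ℝ) < q := lt_of_lt_of_le one_pos hq
  have hqp0 : (0:ℝ) ≤ q / p := le_of_lt (div_pos hq0 hp0)
  -- bound on g
  obtain ⟨M₀, hM₀⟩ := hgsupp.exists_bound_of_continuous hg
  set M : ℝ := max M₀ 0 with hMdef
  have hM0 : 0 ≤ M := le_max_right _ _
  have hM : ∀ ξ, g ξ ≤ M := fun ξ =>
    le_trans (le_trans (le_abs_self _) (hM₀ ξ)) (le_max_left _ _)
  -- support radius
  obtain ⟨R₁, hR₁⟩ := hgsupp.isBounded.subset_closedBall 0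
  set R : ℝ := max R₁ 1 with hRdef
  have hR0 : (0:ℝ) < R := lt_of_lt_of_le one_pos (le_max_right _ _)
  have hgR : ∀ ξ : ℝ, R < ξ → g ξ = 0 := by
    intro ξ hξ
    apply image_eq_zero_of_notMem_tsupport
    intro hmem
    have := hR₁ hmem
    rw [Metric.mem_closedBall, Real.dist_eq, sub_zero] at this
    have : ξ ≤ R₁ := le_trans (le_abs_self _) this
    have : ξ ≤ R := le_trans this (le_max_left _ _)
    linarith
  set V : ℝ := (volume (Metric.closedBall (0 : EuclideanSpace ℝ (Fin n)) 1)).toReal with hVdef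
  have hV0 : 0 ≤ V := ENNReal.toReal_nonneg
  set C : ℝ := M ^ p * R ^ n * V with hCdef
  have hC0 : 0 ≤ C := by positivity
  set β : ℝ := (n:ℝ)/2 - p with hβdef
  set α : ℝ := β * (q / p) with hαdef
  have hα : -1 < α := by
    have h1 : 1 - 1/q < n/(2*p) := by linarith
    have h2 : q * (1 - 1/q) < q * (n/(2*p)) := by
      exact mul_lt_mul_of_pos_left h1 hq0
    have hq' : q * (1/q) = 1 := by field_simp
    have hα' : α = q * (n/(2*p)) - q := by
      rw [hαdef, hβdef]; field_simp
    have hq1 : 1 ≤ q := hq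
    rw [hα']
    nlinarith [mul_one_sub q (1/q)]
  have hα1 : 0 < α + 1 := by linarith
  refine ⟨C ^ (q/p) * ((T+1) ^ (α+1) / (α+1)) + 1, by positivity, ?_⟩
  intro T' hT'
  obtain ⟨hT'1, hT'2⟩ := hT'
  have hT'0 : 0 < T' := lt_trans hT hT'1
  -- pointwise positivity of T' - t on Ioc 0 T
  have hst : ∀ t ∈ Ioc (0:ℝ) T, 0 < T' - t := fun t ht => by
    have := ht.2; linarith
  -- Step 1: inner integral bound
  have inner_nonneg : ∀ t : ℝ,
      0 ≤ ∫ x in Metric.ball (0 : EuclideanSpace ℝ (Fin n)) R₀,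
          |(T'-t)⁻¹ * g ((T'-t) ^ (-(1/2:ℝ)) * ‖x‖)| ^ p := by
    intro t
    apply integral_nonneg
    intro x
    positivity
  have step1 : ∀ t ∈ Ioc (0:ℝ) T,
      (∫ x in Metric.ball (0 : EuclideanSpace ℝ (Fin n)) R₀,
          |(T'-t)⁻¹ * g ((T'-t) ^ (-(1/2:ℝ)) * ‖x‖)| ^ p) ≤ C * (T'-t) ^ β := by
    intro t ht
    have hs : 0 < T' - t := hst t ht
    set s : ℝ := T' - t with hsdef
    set r : ℝ := R * s ^ ((1:ℝ)/2) with hrdef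
    have hr0 : 0 ≤ r := by positivity
    set K : ℝ := M ^ p * s ^ (-p) with hKdef
    have hK0 : 0 ≤ K := by positivity
    -- pointwise bound by indicator
    have keybd : ∀ x : EuclideanSpace ℝ (Fin n),
        |s⁻¹ * g (s ^ (-(1/2:ℝ)) * ‖x‖)| ^ p ≤
          Set.indicator (Metric.closedBall (0 : EuclideanSpace ℝ (Fin n)) r)
            (fun _ => K) x := by
      intro x
      by_cases hx : x ∈ Metric.closedBall (0 : EuclideanSpace ℝ (Fin n)) r
      · rw [Set.indicator_of_mem hx]
        have habs : |s⁻¹ * g (s ^ (-(1/2:ℝ)) * ‖x‖)| ≤ M * s⁻¹ := by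
          rw [abs_mul, abs_of_nonneg (inv_nonneg.2 hs.le),
            abs_of_nonneg (hgnn _)]
          rw [mul_comm]
          exact mul_le_mul_of_nonneg_right (hM _) (inv_nonneg.2 hs.le)
        calc |s⁻¹ * g (s ^ (-(1/2:ℝ)) * ‖x‖)| ^ p
            ≤ (M * s⁻¹) ^ p := Real.rpow_le_rpow (abs_nonneg _) habs hp0.le
          _ = K := by
              rw [hKdef, Real.mul_rpow hM0 (inv_nonneg.2 hs.le),
                Real.inv_rpow hs.le, ← Real.rpow_neg hs.le]
      · rw [Set.indicator_of_notMem hx]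
        have hxr : r < ‖x‖ := by
          simp only [Metric.mem_closedBall, dist_zero_right, not_le] at hx
          exact hx
        have hξ : R < s ^ (-(1/2:ℝ)) * ‖x‖ := by
          have h1 : s ^ (-(1/2:ℝ)) * r < s ^ (-(1/2:ℝ)) * ‖x‖ :=
            mul_lt_mul_of_pos_left hxr (Real.rpow_pos_of_pos hs _)
          have h2 : s ^ (-(1/2:ℝ)) * r = R := by
            rw [hrdef]
            rw [mul_comm R, ← mul_assoc, ← Real.rpow_add hs]
            norm_num
          linarith
        rw [hgR _ hξ, mul_zero, abs_zero, Real.zero_rpow (ne_of_gt hp0)]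
    -- integrate the bound
    have hind_int : Integrable
        (Set.indicator (Metric.closedBall (0 : EuclideanSpace ℝ (Fin n)) r)
          (fun _ => K))
        (volume.restrict (Metric.ball (0 : EuclideanSpace ℝ (Fin n)) R₀)) := by
      apply Integrable.indicator _ measurableSet_closedBall
      exact integrableOn_const measure_ball_lt_top.ne
    have hmono : (∫ x in Metric.ball (0 : EuclideanSpace ℝ (Fin n)) R₀,
          |s⁻¹ * g (s ^ (-(1/2:ℝ)) * ‖x‖)| ^ p) ≤
        ∫ x in Metric.ball (0 : EuclideanSpace ℝ (Fin n)) R₀,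
          Set.indicator (Metric.closedBall (0 : EuclideanSpace ℝ (Fin n)) r)
            (fun _ => K) x := by
      apply integral_mono_of_nonneg
      · exact Filter.Eventually.of_forall (fun x => by positivity)
      · exact hind_int
      · exact Filter.Eventually.of_forall keybd
    have hind_val : (∫ x in Metric.ball (0 : EuclideanSpace ℝ (Fin n)) R₀,
          Set.indicator (Metric.closedBall (0 : EuclideanSpace ℝ (Fin n)) r)
            (fun _ => K) x) ≤ K * (r ^ n * V) := by
      rw [integral_indicator measurableSet_closedBall]
      rw [setIntegral_const]
      rw [measureReal_def, Measure.restrict_apply measurableSet_closedBall]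
      have hle : volume (Metric.closedBall (0 : EuclideanSpace ℝ (Fin n)) r ∩
            Metric.ball (0 : EuclideanSpace ℝ (Fin n)) R₀) ≤
          volume (Metric.closedBall (0 : EuclideanSpace ℝ (Fin n)) r) :=
        measure_mono Set.inter_subset_left
      have hvol : volume (Metric.closedBall (0 : EuclideanSpace ℝ (Fin n)) r) =
          ENNReal.ofReal (r ^ n) * volume
            (Metric.closedBall (0 : EuclideanSpace ℝ (Fin n)) 1) := by
        rw [Measure.addHaar_closedBall' volume _ hr0, finrank_euclideanSpace_fin]
      have htoReal : (volume (Metric.closedBall (0 : EuclideanSpace ℝ (Fin n)) r ∩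
            Metric.ball (0 : EuclideanSpace ℝ (Fin n)) R₀)).toReal ≤ r ^ n * V := by
        have hfin : volume (Metric.closedBall (0 : EuclideanSpace ℝ (Fin n)) r) ≠ ⊤ :=
          (measure_closedBall_lt_top).ne
        calc (volume (Metric.closedBall (0 : EuclideanSpace ℝ (Fin n)) r ∩
              Metric.ball (0 : EuclideanSpace ℝ (Fin n)) R₀)).toReal
            ≤ (volume (Metric.closedBall (0 : EuclideanSpace ℝ (Fin n)) r)).toReal :=
              ENNReal.toReal_mono hfin hle
          _ = r ^ n * V := by
              rw [hvol, ENNReal.toReal_mul, ENNReal.toReal_ofReal (by positivity)]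
      rw [smul_eq_mul, mul_comm]
      exact mul_le_mul_of_nonneg_left htoReal hK0
    have hrpow : K * (r ^ n * V) = C * s ^ β := by
      have hrn : r ^ n = R ^ n * s ^ ((n:ℝ)/2) := by
        rw [hrdef, mul_pow, ← Real.rpow_natCast (s ^ ((1:ℝ)/2)) n,
          ← Real.rpow_mul hs.le]
        ring_nf
      rw [hKdef, hCdef, hrn, hβdef]
      have : s ^ (-p) * s ^ ((n:ℝ)/2) = s ^ ((n:ℝ)/2 - p) := by
        rw [← Real.rpow_add hs]; ring_nf
      calc M ^ p * s ^ (-p) * (R ^ n * s ^ ((n:ℝ)/2) * V)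
          = M ^ p * R ^ n * V * (s ^ (-p) * s ^ ((n:ℝ)/2)) := by ring
        _ = M ^ p * R ^ n * V * s ^ ((n:ℝ)/2 - p) := by rw [this]
    calc (∫ x in Metric.ball (0 : EuclideanSpace ℝ (Fin n)) R₀,
          |s⁻¹ * g (s ^ (-(1/2:ℝ)) * ‖x‖)| ^ p)
        ≤ K * (r ^ n * V) := le_trans hmono hind_val
      _ = C * s ^ β := hrpow
  -- Step 2: bound for the outer integrand
  have step2 : ∀ t ∈ Ioc (0:ℝ) T,
      (∫ x in Metric.ball (0 : EuclideanSpace ℝ (Fin n)) R₀,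
          |(T'-t)⁻¹ * g ((T'-t) ^ (-(1/2:ℝ)) * ‖x‖)| ^ p) ^ (q/p) ≤
        C ^ (q/p) * (T'-t) ^ α := by
    intro t ht
    have hs : 0 < T' - t := hst t ht
    calc (∫ x in Metric.ball (0 : EuclideanSpace ℝ (Fin n)) R₀,
          |(T'-t)⁻¹ * g ((T'-t) ^ (-(1/2:ℝ)) * ‖x‖)| ^ p) ^ (q/p)
        ≤ (C * (T'-t) ^ β) ^ (q/p) :=
          Real.rpow_le_rpow (inner_nonneg t) (step1 t ht) hqp0
      _ = C ^ (q/p) * (T'-t) ^ α := by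
          rw [Real.mul_rpow hC0 (Real.rpow_nonneg hs.le _),
            ← Real.rpow_mul hs.le]
  -- Step 3: integrate in time
  have hcont : ContinuousOn (fun t => C ^ (q/p) * (T'-t) ^ α) (Icc (0:ℝ) T) := by
    apply ContinuousOn.mul continuousOn_const
    apply ContinuousOn.rpow_const
    · exact (continuousOn_const.sub continuousOn_id)
    · intro t ht
      left
      have : t ≤ T := ht.2
      have : 0 < T' - t := by linarith
      exact ne_of_gt this
  have hbd_int : IntegrableOn (fun t => C ^ (q/p) * (T'-t) ^ α) (Ioc (0:ℝ) T) :=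
    (hcont.integrableOn_Icc).mono_set Ioc_subset_Icc_self
  have houter : (∫ t in Ioc (0:ℝ) T,
        (∫ x in Metric.ball (0 : EuclideanSpace ℝ (Fin n)) R₀,
            |(T'-t)⁻¹ * g ((T'-t) ^ (-(1/2:ℝ)) * ‖x‖)| ^ p) ^ (q/p)) ≤
      ∫ t in Ioc (0:ℝ) T, C ^ (q/p) * (T'-t) ^ α := by
    apply integral_mono_of_nonneg
    · exact Filter.Eventually.of_forall
        (fun t => Real.rpow_nonneg (inner_nonneg t) _)
    · exact hbd_int
    · rw [Filter.EventuallyLE, ae_restrict_iff' measurableSet_Ioc]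
      exact Filter.Eventually.of_forall step2
  have hval : (∫ t in Ioc (0:ℝ) T, C ^ (q/p) * (T'-t) ^ α) ≤
      C ^ (q/p) * ((T+1) ^ (α+1) / (α+1)) := by
    rw [integral_const_mul]
    apply mul_le_mul_of_nonneg_left _ (Real.rpow_nonneg hC0 _)
    have heq : (∫ t in Ioc (0:ℝ) T, (T'-t) ^ α) = ∫ t in (0:ℝ)..T, (T'-t) ^ α := by
      rw [intervalIntegral.integral_of_le hT.le]
    rw [heq]
    have hcomp : (∫ t in (0:ℝ)..T, (T'-t) ^ α) =
        ∫ u in (T'-T)..(T'-0), u ^ α :=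
      intervalIntegral.integral_comp_sub_left (fun u => u ^ α) T'
    rw [hcomp, sub_zero, integral_rpow (Or.inl hα)]
    have h1 : 0 ≤ (T' - T) ^ (α+1) := Real.rpow_nonneg (by linarith) _
    have h2 : T' ^ (α+1) ≤ (T+1) ^ (α+1) :=
      Real.rpow_le_rpow hT'0.le hT'2.le hα1.le
    apply div_le_div_of_nonneg_right _ hα1.le
    linarith
  calc (∫ t in Ioc (0:ℝ) T,
        (∫ x in Metric.ball (0 : EuclideanSpace ℝ (Fin n)) R₀,
            |(T'-t)⁻¹ * g ((T'-t) ^ (-(1/2:ℝ)) * ‖x‖)| ^ p) ^ (q/p))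
      ≤ C ^ (q/p) * ((T+1) ^ (α+1) / (α+1)) := le_trans houter hval
    _ ≤ C ^ (q/p) * ((T+1) ^ (α+1) / (α+1)) + 1 := by linarith
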